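/- For every natural number N ≥ 1, modulo the ideal of A generated by z + z⁻¹ + xy one has the congruence e_N(y) ≡ −(N+1)·x·y·(z + z⁻¹)^(N−1)·(z − z⁻¹), i.e. e_N(y) + (N+1)·x·y·(z + z⁻¹)^(N−1)·(z − z⁻¹) lies in the ideal generated by z + z⁻¹ + xy. -/
import Mathlib

open LaurentPolynomial

noncomputable section

/-- The ring `A = ℂ[x, y, z, z⁻¹]`: Laurent polynomials in `z` over `ℂ[x, y]`. -/
abbrev A : Type := LaurentPolynomial (MvPolynomial (Fin 2) ℂ)

/-- The variable `x`. -/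
def Xv : A := C (MvPolynomial.X 0)

/-- The variable `y`. -/
def Yv : A := C (MvPolynomial.X 1)

/-- The variable `z`. -/
def Zv : A := T 1

/-- The variable `z⁻¹`. -/
def Zi : A := T (-1)

lemma ZZ : Zv * Zi = 1 := by
  rw [Zv, Zi, ← T_add]; norm_num

lemma D_Zi (D : Derivation ℂ A A) : D Zi = -(Zi * Zi * D Zv) := by
  have h0 : D (Zv * Zi) = 0 := by rw [ZZ]; simp
  rw [D.leibniz] at h0
  have h1 : Zv * D Zi + Zi * D Zv = 0 := by simpa [smul_eq_mul] using h0
  linear_combination Zi * h1 - D Zi * ZZ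

lemma Dmul (D : Derivation ℂ A A) (a b : A) : D (a * b) = a * D b + b * D a := by
  rw [D.leibniz]; simp [smul_eq_mul]

/-- Modulo the ideal generated by `z + z⁻¹ + xy`, one has
`e_N(y) ≡ −(N+1) x y (z + z⁻¹)^(N−1) (z − z⁻¹)` for `N ≥ 1`. -/
theorem stmt8
    (e f kk kk' : Derivation ℂ A A)
    (hex : e Xv = 0) (hey : e Yv = Zv - Zi) (hez : e Zv = -(Xv * Zv))
    (hfx : f Xv = -(Zv - Zi)) (hfy : f Yv = 0) (hfz : f Zv = Yv * Zv)
    (hkx : kk Xv = Xv * Zv) (hky : kk Yv = -(Yv * Zv)) (hkz : kk Zv = 0)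
    (hk'x : kk' Xv = Xv * Zi) (hk'y : kk' Yv = -(Yv * Zi)) (hk'z : kk' Zv = 0)
    (E F : ℕ → Derivation ℂ A A) (hE0 : E 0 = e) (hF0 : F 0 = f)
    (hEs : ∀ (n : ℕ) (a : A), E (n + 1) a = (kk + kk') (E n a) - E n ((kk + kk') a))
    (hFs : ∀ (n : ℕ) (a : A), F (n + 1) a = (kk + kk') (F n a) - F n ((kk + kk') a))
    (N : ℕ) (hN : 1 ≤ N) :
    E N Yv + ((N : A) + 1) * Xv * Yv * (Zv + Zi) ^ (N - 1) * (Zv - Zi)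
      ∈ Ideal.span {Zv + Zi + Xv * Yv} := by
  set L : Derivation ℂ A A := kk + kk' with hL
  set u : A := Zv + Zi with hu
  set v : A := Zv - Zi with hv
  -- values of derivations on Zi
  have hkZi : kk Zi = 0 := by rw [D_Zi, hkz]; ring
  have hk'Zi : kk' Zi = 0 := by rw [D_Zi, hk'z]; ring
  have heZi : e Zi = Xv * Zi := by
    rw [D_Zi, hez]; linear_combination Xv * Zi * ZZ
  -- values of L
  have hLZv : L Zv = 0 := by simp [hL, Derivation.add_apply, hkz, hk'z]
  have hLZi : L Zi = 0 := by simp [hL, Derivation.add_apply, hkZi, hk'Zi]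
  have hLx : L Xv = Xv * u := by
    simp only [hL, Derivation.add_apply, hkx, hk'x, hu]; ring
  have hLy : L Yv = -(Yv * u) := by
    simp only [hL, Derivation.add_apply, hky, hk'y, hu]; ring
  have hLu : L u = 0 := by rw [hu, map_add, hLZv, hLZi, add_zero]
  have hLv : L v = 0 := by rw [hv, map_sub, hLZv, hLZi, sub_zero]
  have hLun : ∀ n : ℕ, L (u ^ n) = 0 := by
    intro n
    induction n with
    | zero => simp
    | succ m ih => rw [pow_succ, Dmul, ih, hLu]; ring
  have hLuv : ∀ n : ℕ, L (u ^ n * v) = 0 := by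
    intro n; rw [Dmul, hLun, hLv]; ring
  -- E n u = -(Xv * u^n * v)
  have heu : e u = -(Xv * 1 * v) := by
    rw [hu, map_add, hez, heZi, hv]; ring
  have hEu : ∀ n : ℕ, E n u = -(Xv * u ^ n * v) := by
    intro n
    induction n with
    | zero => rw [hE0]; simpa using heu
    | succ m ih =>
      rw [hEs, ih, hLu, map_zero, map_neg, Dmul, hLv, Dmul, hLun, hLx]
      ring
  -- E (m+1) Yv = u^(m+1) * v - (m+1) * Xv * Yv * u^m * v
  have hEcast : ∀ (n : ℕ) (D : Derivation ℂ A A) (a : A) (c : ℕ),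
      D ((c : A) * a) = (c : A) * D a := by
    intro n D a c
    rw [Dmul]
    have : D ((c : A)) = 0 := by
      have h : ((c : A)) = algebraMap ℂ A ((c : ℂ)) := by push_cast; simp
      rw [h, Derivation.map_algebraMap]
    rw [this]; ring
  have hEy : ∀ m : ℕ, E (m + 1) Yv
      = u ^ (m + 1) * v - ((m : A) + 1) * (Xv * Yv) * u ^ m * v := by
    intro m
    induction m with
    | zero =>
      rw [hEs, hE0, hey, hLv, hLy, map_neg, Dmul, heu, hey]
      ring
    | succ m ih =>
      have key : L (E (m + 1) Yv) = 0 := by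
        rw [ih]
        have h1 : ((m : A) + 1) * (Xv * Yv) * u ^ m * v
            = ((m + 1 : ℕ) : A) * (Xv * Yv * (u ^ m * v)) := by push_cast; ring
        rw [map_sub, hLuv, h1, hEcast 0, Dmul, hLuv, Dmul, hLx, hLy]
        ring
      rw [hEs, key, hLy, map_neg, Dmul, hEu, ih]
      push_cast
      ring
  -- finish
  obtain ⟨M, rfl⟩ : ∃ M, N = M + 1 := ⟨N - 1, (Nat.succ_pred_eq_of_pos hN).symm⟩
  rw [Ideal.mem_span_singleton]
  refine ⟨u ^ M * v, ?_⟩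
  rw [hEy M]
  have : M + 1 - 1 = M := rfl
  rw [this]
  push_cast
  ring
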